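/- Subadditivity of the TSP matching bound: in a complete weighted graph with triangle inequality, for any even-cardinality subset U of vertices, the minimum-weight perfect matching on U has weight at most half the weight of an optimal TSP tour on the whole vertex set. -/

import Mathlib

open Finset
open Fin.NatCast

/-- The weight of an (undirected) edge, given a symmetrized distance function. -/
noncomputable def edgeWeight {V : Type*} (d : V → V → ℝ) : Sym2 V → ℝ :=
  Sym2.lift ⟨fun a b => (d a b + d b a) / 2, fun a b => by ring⟩

/-- Total weight of a finite set of edges. -/
noncomputable def setWeight {V : Type*} (d : V → V → ℝ) (S : Finset (Sym2 V)) : ℝ :=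
  ∑ e ∈ S, edgeWeight d e

/-- A perfect matching on the vertex set `U`, given as its edge set: non-loop edges
such that every vertex of `U` lies on exactly one edge, and no other vertex on any. -/
def IsPerfectMatchingOn {V : Type*} [DecidableEq V] (U : Finset V)
    (M : Finset (Sym2 V)) : Prop :=
  (∀ e ∈ M, ¬ e.IsDiag) ∧
    ∀ v : V, (M.filter fun e => v ∈ e).card = if v ∈ U then 1 else 0

/-- The weight of the Hamiltonian tour visiting the vertices in the cyclic order `σ`. -/
noncomputable def tourWeight {V : Type*} (d : V → V → ℝ) {n : ℕ} [NeZero n]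
    (σ : Fin n ≃ V) : ℝ :=
  ∑ i : Fin n, d (σ i) (σ (i + 1))

lemma tsp_path_bound {V : Type*} (d : V → V → ℝ)
    (hdtri : ∀ a b c, d a c ≤ d a b + d b c) (f : ℕ → V) :
    ∀ a b, a < b → d (f a) (f b) ≤ ∑ x ∈ Finset.Ico a b, d (f x) (f (x+1)) := by
  intro a b hab
  induction b, hab using Nat.le_induction with
  | base => simp [Nat.Ico_succ_singleton]
  | succ b hb ih =>
    calc d (f a) (f (b+1)) ≤ d (f a) (f b) + d (f b) (f (b+1)) := hdtri _ _ _
      _ ≤ _ := by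
          rw [Finset.sum_Ico_succ_top (by omega : a ≤ b)]
          linarith

lemma tsp_window {n : ℕ} (g : ℕ → ℝ) (hg : ∀ m, g (m+n) = g m) (a : ℕ) :
    ∑ x ∈ Finset.Ico a (a+n), g x = ∑ x ∈ Finset.range n, g x := by
  induction a with
  | zero => rw [Finset.range_eq_Ico, Nat.zero_add]
  | succ a ih =>
    rcases Nat.eq_zero_or_pos n with h0 | h0
    · simp [h0]
    · have h1 : ∑ x ∈ Finset.Ico (a+1) (a+1+n), g x
          = (∑ x ∈ Finset.Ico (a+1) (a+n), g x) + g (a+n) := by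
        rw [show a+1+n = (a+n)+1 from by omega, Finset.sum_Ico_succ_top (by omega)]
      have h2 : ∑ x ∈ Finset.Ico a (a+n), g x
          = g a + ∑ x ∈ Finset.Ico (a+1) (a+n), g x := by
        rw [Finset.sum_eq_sum_Ico_succ_bot (by omega)]
      have h3 := hg a
      linarith [ih]

lemma tsp_telescope (g : ℕ → ℝ) (q : ℕ → ℕ) (h : ∀ j, q j ≤ q (j+1)) (t : ℕ) :
    ∑ j ∈ Finset.range t, ∑ x ∈ Finset.Ico (q j) (q (j+1)), g x
      = ∑ x ∈ Finset.Ico (q 0) (q t), g x := by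
  induction t with
  | zero => simp
  | succ t ih =>
    rw [Finset.sum_range_succ, ih,
      Finset.sum_Ico_consecutive g (monotone_nat_of_le_succ h (Nat.zero_le t)) (h t)]

lemma tsp_split (h : ℕ → ℝ) (m : ℕ) :
    ∑ j ∈ Finset.range (2*m), h j = ∑ t ∈ Finset.range m, (h (2*t) + h (2*t+1)) := by
  induction m with
  | zero => simp
  | succ m ih =>
    rw [show 2*(m+1) = 2*m+1+1 from by ring, Finset.sum_range_succ, Finset.sum_range_succ,
      Finset.sum_range_succ, ih]
    ring

lemma tsp_edgeWeight_mk {V : Type*} (d : V → V → ℝ) (hdsym : ∀ a b, d a b = d b a)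
    (a b : V) : edgeWeight d s(a, b) = d a b := by
  show (d a b + d b a) / 2 = d a b
  rw [← hdsym a b]; ring

lemma tsp_builder {V : Type*} [DecidableEq V] (d : V → V → ℝ)
    (hdsym : ∀ a b, d a b = d b a)
    (U : Finset V) (m : ℕ) (w : ℕ → V)
    (hinj : ∀ a, a < 2*m → ∀ b, b < 2*m → w a = w b → a = b)
    (himg : ∀ v, v ∈ U ↔ ∃ j, j < 2*m ∧ w j = v) :
    IsPerfectMatchingOn U ((Finset.range m).image fun t => s(w (2*t), w (2*t+1))) ∧
      setWeight d ((Finset.range m).image fun t => s(w (2*t), w (2*t+1)))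
        = ∑ t ∈ Finset.range m, d (w (2*t)) (w (2*t+1)) := by
  set M := (Finset.range m).image fun t => s(w (2*t), w (2*t+1)) with hM
  have hmem : ∀ e, e ∈ M ↔ ∃ t, t < m ∧ e = s(w (2*t), w (2*t+1)) := by
    intro e
    simp only [hM, Finset.mem_image, Finset.mem_range]
    constructor
    · rintro ⟨t, ht, rfl⟩; exact ⟨t, ht, rfl⟩
    · rintro ⟨t, ht, rfl⟩; exact ⟨t, ht, rfl⟩
  refine ⟨⟨?_, ?_⟩, ?_⟩
  · intro e he
    obtain ⟨t, ht, rfl⟩ := (hmem e).1 he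
    rw [Sym2.mk_isDiag_iff]
    intro h
    have := hinj _ (by omega) _ (by omega) h
    omega
  · intro v
    by_cases hv : v ∈ U
    · rw [if_pos hv, Finset.card_eq_one]
      obtain ⟨j, hj, hwj⟩ := (himg v).1 hv
      refine ⟨s(w (2*(j/2)), w (2*(j/2)+1)), ?_⟩
      ext e
      simp only [Finset.mem_filter, Finset.mem_singleton]
      constructor
      · rintro ⟨heM, hve⟩
        obtain ⟨t, ht, rfl⟩ := (hmem e).1 heM
        rw [Sym2.mem_iff] at hve
        have hteq : t = j / 2 := by
          rcases hve with h | h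
          · have := hinj _ hj _ (by omega) (hwj.trans h)
            omega
          · have := hinj _ hj _ (by omega) (hwj.trans h)
            omega
        rw [hteq]
      · rintro rfl
        refine ⟨(hmem _).2 ⟨j/2, by omega, rfl⟩, ?_⟩
        rw [Sym2.mem_iff]
        have : j = 2*(j/2) ∨ j = 2*(j/2)+1 := by omega
        rcases this with h | h
        · exact Or.inl (hwj.symm.trans (congrArg w h))
        · exact Or.inr (hwj.symm.trans (congrArg w h))
    · rw [if_neg hv, Finset.card_eq_zero, Finset.filter_eq_empty_iff]
      intro e heM hve
      obtain ⟨t, ht, rfl⟩ := (hmem e).1 heM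
      rw [Sym2.mem_iff] at hve
      apply hv
      rcases hve with h | h
      · exact (himg v).2 ⟨2*t, by omega, h.symm⟩
      · exact (himg v).2 ⟨2*t+1, by omega, h.symm⟩
  · rw [hM, setWeight, Finset.sum_image ?_]
    · exact Finset.sum_congr rfl fun t _ => tsp_edgeWeight_mk d hdsym _ _
    · intro a ha b hb h
      rw [Finset.mem_coe, Finset.mem_range] at ha hb
      rw [Sym2.eq_iff] at h
      rcases h with ⟨h1, _⟩ | ⟨h1, _⟩
      · have := hinj _ (by omega) _ (by omega) h1; omega
      · have := hinj _ (by omega) _ (by omega) h1; omega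


theorem tsp_matching_half_tour_bound {V : Type*} [Fintype V] [DecidableEq V]
    {n : ℕ} [NeZero n] (hn : n = Fintype.card V) (hn2 : 2 ≤ n)
    (d : V → V → ℝ)
    (hd0 : ∀ a b, 0 ≤ d a b) (hdsym : ∀ a b, d a b = d b a)
    (hdtri : ∀ a b c, d a c ≤ d a b + d b c)
    (U : Finset V) (hU : Even U.card)
    (Astar : Fin n ≃ V)
    (hAstar : ∀ σ : Fin n ≃ V, tourWeight d Astar ≤ tourWeight d σ) :
    ∃ M : Finset (Sym2 V), IsPerfectMatchingOn U M ∧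
      setWeight d M ≤ tourWeight d Astar / 2 := by
  classical
  have hn0 : 0 < n := Nat.lt_of_lt_of_le Nat.zero_lt_two hn2
  set f : ℕ → V := fun x => Astar ((x : ℕ) : Fin n) with hf
  set g : ℕ → ℝ := fun x => d (f x) (f (x+1)) with hg
  have hcast : ∀ x : ℕ, ((x + n : ℕ) : Fin n) = ((x : ℕ) : Fin n) := by
    intro x; push_cast; simp
  have hfper : ∀ x, f (x + n) = f x := by
    intro x; simp only [hf, hcast]
  have hgper : ∀ x, g (x + n) = g x := by
    intro x
    simp only [hg]
    rw [show x + n + 1 = (x+1) + n from by omega, hfper, hfper]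
  have hT : tourWeight d Astar = ∑ i ∈ Finset.range n, g i := by
    rw [tourWeight, ← Fin.sum_univ_eq_sum_range g n]
    refine Finset.sum_congr rfl fun i _ => ?_
    simp only [hg, hf]
    rw [Fin.cast_val_eq_self, show (((i : ℕ) + 1 : ℕ) : Fin n) = i + 1 by push_cast [Fin.cast_val_eq_self]; ring]
  have hT0 : 0 ≤ tourWeight d Astar := by
    rw [hT]; exact Finset.sum_nonneg fun x _ => hd0 _ _
  set k := U.card with hk
  rcases Nat.eq_zero_or_pos k with hk0 | hkpos
  · -- U is empty
    have hUe : U = ∅ := Finset.card_eq_zero.1 hk0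
    refine ⟨∅, ⟨fun e he => absurd he (Finset.notMem_empty e), fun v => ?_⟩, ?_⟩
    · simp [hUe]
    · simpa [setWeight] using by linarith
  -- main case
  have hk2 : 2 ∣ k := hU.two_dvd
  set m := k / 2 with hm
  have hkm : k = 2 * m := by omega
  -- positions of U along the tour
  set P : Finset ℕ := U.image (fun v => ((Astar.symm v : Fin n) : ℕ)) with hP
  have hPcard : P.card = k := by
    rw [hP]
    exact Finset.card_image_of_injective U
      (Function.Injective.comp Fin.val_injective Astar.symm.injective)
  have hPlt : ∀ p ∈ P, p < n := by
    intro p hp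
    rw [hP, Finset.mem_image] at hp
    obtain ⟨v, _, rfl⟩ := hp
    exact (Astar.symm v).isLt
  set ord := P.orderIsoOfFin hPcard with hord
  set c : ℕ → ℕ := fun j => (ord ⟨j % k, Nat.mod_lt j hkpos⟩ : ℕ) with hc
  set q : ℕ → ℕ := fun j => c j + (j / k) * n with hq
  have hc_mem : ∀ j, c j ∈ P := fun j => (ord _).2
  have hc_lt : ∀ j, c j < n := fun j => hPlt _ (hc_mem j)
  have hqval : ∀ j (h : j < k), q j = (ord ⟨j, h⟩ : ℕ) := by
    intro j h
    simp only [hq, hc]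
    rw [Nat.div_eq_of_lt h, Nat.zero_mul, Nat.add_zero]
    exact congrArg (fun i : Fin k => ((ord i : ℕ))) (Fin.mk_eq_mk.2 (Nat.mod_eq_of_lt h))
  have hcper : ∀ j, c (j + k) = c j := by
    intro j
    simp only [hc]
    exact congrArg (fun i : Fin k => ((ord i : ℕ))) (Fin.mk_eq_mk.2 (Nat.add_mod_right j k))
  have hqper : ∀ j, q (j + k) = q j + n := by
    intro j
    simp only [hq]
    rw [hcper, Nat.add_div_right j hkpos, Nat.succ_mul]
    ring
  have hstep : ∀ j, j < k → q j < q (j+1) := by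
    intro j hj
    by_cases h : j + 1 < k
    · rw [hqval j hj, hqval (j+1) h]
      exact ord.strictMono (Fin.mk_lt_mk.2 (by omega))
    · have hjk : j + 1 = k := by omega
      have h0 := hqper 0
      rw [Nat.zero_add] at h0
      have h1 : q j < n := by rw [hqval j hj]; exact hPlt _ (ord _).2
      rw [hjk]
      omega
  have hstep_all : ∀ j, q j < q (j+1) := by
    intro j
    induction j using Nat.strong_induction_on with
    | _ j ih =>
      by_cases hj : j < k
      · exact hstep j hj
      · have hj1 : j - k + k = j := by omega
        have h1 := hqper (j - k)
        have h2 := hqper (j - k + 1)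
        have h3 := ih (j - k) (by omega)
        rw [hj1] at h1
        rw [show j - k + 1 + k = j + 1 from by omega] at h2
        omega
  -- the cyclic sequence of U's vertices in tour order
  set u : ℕ → V := fun j => f (q j) with hu
  have hu_inj : ∀ a, a < k → ∀ b, b < k → u a = u b → a = b := by
    intro a ha b hb h
    have hqa : q a < n := by rw [hqval a ha]; exact hPlt _ (ord _).2
    have hqb : q b < n := by rw [hqval b hb]; exact hPlt _ (ord _).2
    have h2 : ((q a : ℕ) : Fin n) = ((q b : ℕ) : Fin n) := Astar.injective h
    have h3 : q a = q b := by
      have := congrArg Fin.val h2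
      rwa [Fin.val_natCast, Fin.val_natCast, Nat.mod_eq_of_lt hqa, Nat.mod_eq_of_lt hqb] at this
    rw [hqval a ha, hqval b hb] at h3
    have h4 : ord ⟨a, ha⟩ = ord ⟨b, hb⟩ := Subtype.ext h3
    have h5 := ord.injective h4
    exact Fin.mk.injEq .. ▸ (by injection h5)
  have hu_per : ∀ j, u (j + k) = u j := by
    intro j
    simp only [hu]
    rw [hqper, hfper]
  have hu_img : ∀ v, v ∈ U ↔ ∃ j, j < k ∧ u j = v := by
    intro v
    constructor
    · intro hv
      have hp : ((Astar.symm v : Fin n) : ℕ) ∈ P := by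
        rw [hP]; exact Finset.mem_image_of_mem _ hv
      set j := ord.symm ⟨_, hp⟩ with hj
      refine ⟨j, j.isLt, ?_⟩
      have : ord ⟨(j : ℕ), j.isLt⟩ = ⟨_, hp⟩ := by
        rw [Fin.eta]; exact ord.apply_symm_apply _
      simp only [hu, hf]
      rw [hqval _ j.isLt, this]
      simp [Fin.cast_val_eq_self]
    · rintro ⟨j, hjk, rfl⟩
      have hmem : q j ∈ P := by rw [hqval j hjk]; exact (ord _).2
      rw [hP, Finset.mem_image] at hmem
      obtain ⟨v, hv, hqj⟩ := hmem
      simp only [hu, hf]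
      rw [← hqj]
      simpa [Fin.cast_val_eq_self] using hv
  -- the two alternating matchings
  set w0 : ℝ := ∑ t ∈ Finset.range m, d (u (2*t)) (u (2*t+1)) with hw0
  set w1 : ℝ := ∑ t ∈ Finset.range m, d (u (2*t+1)) (u (2*t+1+1)) with hw1
  have hsum : w0 + w1 = ∑ j ∈ Finset.range k, d (u j) (u (j+1)) := by
    rw [hkm, tsp_split (fun j => d (u j) (u (j+1))) m, Finset.sum_add_distrib]
  have hcycle : ∑ j ∈ Finset.range k, d (u j) (u (j+1)) ≤ tourWeight d Astar := by
    calc ∑ j ∈ Finset.range k, d (u j) (u (j+1))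
        ≤ ∑ j ∈ Finset.range k, ∑ x ∈ Finset.Ico (q j) (q (j+1)), g x := by
          refine Finset.sum_le_sum fun j _ => ?_
          exact tsp_path_bound d hdtri f (q j) (q (j+1)) (hstep_all j)
      _ = ∑ x ∈ Finset.Ico (q 0) (q k), g x :=
          tsp_telescope g q (fun j => (hstep_all j).le) k
      _ = ∑ x ∈ Finset.range n, g x := by
          have h0 := hqper 0
          rw [Nat.zero_add] at h0
          rw [h0]
          exact tsp_window g hgper (q 0)
      _ = tourWeight d Astar := hT.symm
  have hkey : w0 + w1 ≤ tourWeight d Astar := hsum ▸ hcycle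
  rcases le_total w0 w1 with hle | hle
  · obtain ⟨hpm, hwt⟩ := tsp_builder d hdsym U m u
      (by rw [← hkm]; exact hu_inj) (by rw [← hkm]; exact hu_img)
    exact ⟨_, hpm, by rw [hwt, ← hw0]; linarith⟩
  · set w' : ℕ → V := fun j => u (j + 1) with hw'
    have hinj' : ∀ a, a < 2*m → ∀ b, b < 2*m → w' a = w' b → a = b := by
      intro a ha b hb h
      rw [← hkm] at ha hb
      simp only [hw'] at h
      by_cases ha1 : a + 1 < k
      · by_cases hb1 : b + 1 < k
        · have := hu_inj _ ha1 _ hb1 h; omega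
        · have hb2 : b + 1 = k := by omega
          have h0 : u (b+1) = u 0 := by
            rw [hb2, show k = 0 + k from (Nat.zero_add k).symm, hu_per]
          rw [h0] at h
          have := hu_inj _ ha1 _ hkpos h
          omega
      · have ha2 : a + 1 = k := by omega
        have h0 : u (a+1) = u 0 := by
          rw [ha2, show k = 0 + k from (Nat.zero_add k).symm, hu_per]
        rw [h0] at h
        by_cases hb1 : b + 1 < k
        · have := hu_inj _ hkpos _ hb1 h; omega
        · omega
    have himg' : ∀ v, v ∈ U ↔ ∃ j, j < 2*m ∧ w' j = v := by
      intro v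
      rw [hu_img v]
      constructor
      · rintro ⟨j, hj, rfl⟩
        rcases Nat.eq_zero_or_pos j with h0 | h0
        · refine ⟨k - 1, by omega, ?_⟩
          simp only [hw']
          rw [show k - 1 + 1 = 0 + k from by omega, hu_per, h0]
        · exact ⟨j - 1, by omega, by simp only [hw']; rw [show j - 1 + 1 = j from by omega]⟩
      · rintro ⟨j, hj, rfl⟩
        rw [← hkm] at hj
        by_cases h1 : j + 1 < k
        · exact ⟨j + 1, h1, rfl⟩
        · refine ⟨0, hkpos, ?_⟩
          simp only [hw']
          rw [show j + 1 = 0 + k from by omega, hu_per]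
    obtain ⟨hpm, hwt⟩ := tsp_builder d hdsym U m w' hinj' himg'
    refine ⟨_, hpm, ?_⟩
    rw [hwt]
    have h5 : ∑ t ∈ Finset.range m, d (w' (2*t)) (w' (2*t+1)) = w1 := rfl
    rw [h5]
    linarith
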